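/- For every real q with 0 < q < 1, the surface integral over the unit sphere satisfies ∫_{S²} √(x₁² + x₂² + q·x₃²) dσ(x) = 2π (√q + arcsin(√(1−q)) / √(1−q)). -/

import Mathlib

open MeasureTheory

noncomputable section

/-- The unit sphere `S²` in `ℝ³`. -/
abbrev S2 : Set (EuclideanSpace ℝ (Fin 3)) := Metric.sphere (0 : EuclideanSpace ℝ (Fin 3)) 1

/-- The surface measure `σ` on the unit sphere `S² ⊂ ℝ³`; it is the 2-dimensional
(Hausdorff) surface measure, with total mass `4π`. -/
def sphereMeasure : Measure (Metric.sphere (0 : EuclideanSpace ℝ (Fin 3)) 1) :=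
  (volume : Measure (EuclideanSpace ℝ (Fin 3))).toSphere

section Aux

open Set Metric Real

local notation "E3" => EuclideanSpace ℝ (Fin 3)

/-- Reduction of the sphere integral of a 1-homogeneous function to a ball integral. -/
theorem sphere_red_aux (f : E3 → ℝ) (hf : ∀ (r : ℝ), 0 < r → ∀ x : E3, f (r • x) = r * f x) :
    ∫ x : Metric.sphere (0 : E3) 1, f x ∂(volume : Measure E3).toSphere
      = 4 * ∫ x : E3, Set.indicator (ball (0:E3) 1) f x := by
  set μ : Measure E3 := volume with hμ
  have hdim : Module.finrank ℝ E3 = 3 := finrank_euclideanSpace_fin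
  have key : ∫ x : E3, Set.indicator (ball (0:E3) 1) f x ∂μ
      = ∫ p : Metric.sphere (0 : E3) 1 × Set.Ioi (0:ℝ),
          f p.1.1 * Set.indicator (Set.Iio (1:ℝ)) id p.2.1
          ∂(μ.toSphere.prod (.volumeIoiPow (Module.finrank ℝ E3 - 1))) := by
    have e1 : ∫ x : E3, Set.indicator (ball (0:E3) 1) f x ∂μ
        = ∫ x : ({0}ᶜ : Set E3), Set.indicator (ball (0:E3) 1) f x.1 ∂(μ.comap Subtype.val) := by
      rw [integral_subtype_comap (measurableSet_singleton (0:E3)).compl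
        (fun x => Set.indicator (ball (0:E3) 1) f x), restrict_compl_singleton]
    rw [e1, ← (μ.measurePreserving_homeomorphUnitSphereProd).integral_comp
        (Homeomorph.measurableEmbedding _)
        (fun p => f p.1.1 * Set.indicator (Set.Iio (1:ℝ)) id p.2.1)]
    congr 1
    ext x
    have hx : (x : E3) ≠ 0 := x.2
    have hnorm : (0:ℝ) < ‖(x:E3)‖ := norm_pos_iff.2 hx
    simp only [homeomorphUnitSphereProd_apply_fst_coe, homeomorphUnitSphereProd_apply_snd_coe]
    rw [hf _ (inv_pos.2 hnorm)]
    by_cases h1 : ‖(x:E3)‖ < 1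
    · rw [Set.indicator_of_mem (Metric.mem_ball.2 (by simpa [dist_zero_right] using h1)),
        Set.indicator_of_mem (Set.mem_Iio.2 h1)]
      simp only [id]
      field_simp
    · rw [Set.indicator_of_notMem (by simpa [mem_ball, dist_zero_right] using h1),
        Set.indicator_of_notMem (fun h => h1 (Set.mem_Iio.1 h))]
      ring
  rw [key, integral_prod_mul (fun ω : Metric.sphere (0:E3) 1 => f ω.1)
      (fun r : Set.Ioi (0:ℝ) => Set.indicator (Set.Iio (1:ℝ)) id r.1)]
  have hW : (∫ r : Set.Ioi (0:ℝ), Set.indicator (Set.Iio (1:ℝ)) id r.1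
      ∂(MeasureTheory.Measure.volumeIoiPow (Module.finrank ℝ E3 - 1))) = 4⁻¹ := by
    rw [hdim]
    simp only [MeasureTheory.Measure.volumeIoiPow, ENNReal.ofReal]
    rw [integral_withDensity_eq_integral_smul
        ((measurable_subtype_coe.pow_const _).real_toNNReal)]
    rw [integral_subtype_comap measurableSet_Ioi
        (fun a : ℝ => Real.toNNReal (a ^ (3-1)) • Set.indicator (Set.Iio (1:ℝ)) id a)]
    have : ∀ a ∈ Set.Ioi (0:ℝ),
        Real.toNNReal (a ^ (3-1)) • Set.indicator (Set.Iio (1:ℝ)) id a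
        = Set.indicator (Set.Iio (1:ℝ)) (fun a => a ^ 3) a := by
      intro a ha
      rw [NNReal.smul_def, Real.coe_toNNReal _ (pow_nonneg (le_of_lt ha) _)]
      by_cases h1 : a ∈ Set.Iio (1:ℝ)
      · rw [Set.indicator_of_mem h1, Set.indicator_of_mem h1]
        simp only [id, smul_eq_mul]; ring
      · rw [Set.indicator_of_notMem h1, Set.indicator_of_notMem h1, smul_zero]
    rw [setIntegral_congr_fun measurableSet_Ioi this,
        setIntegral_indicator measurableSet_Iio, Set.Ioi_inter_Iio,
        ← integral_Ioc_eq_integral_Ioo, ← intervalIntegral.integral_of_le zero_le_one,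
        integral_pow]
    norm_num
  rw [hW]
  ring

/-- Transfer the ball integral to `ℝ × ℝ × ℝ`. -/
theorem transfer_aux (q : ℝ) :
    (∫ x : E3, Set.indicator (ball (0:E3) 1)
        (fun x : E3 => Real.sqrt (x 0 ^ 2 + x 1 ^ 2 + q * x 2 ^ 2)) x)
    = ∫ u : ℝ × ℝ × ℝ, (if u.2.1 ^ 2 + u.2.2 ^ 2 + u.1 ^ 2 < 1 then
        Real.sqrt (u.2.1 ^ 2 + u.2.2 ^ 2 + q * u.1 ^ 2) else 0) := by
  have key : ∀ x : E3, Set.indicator (ball (0:E3) 1)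
        (fun x : E3 => Real.sqrt (x 0 ^ 2 + x 1 ^ 2 + q * x 2 ^ 2)) x
      = (if x 0 ^ 2 + x 1 ^ 2 + x 2 ^ 2 < 1 then
          Real.sqrt (x 0 ^ 2 + x 1 ^ 2 + q * x 2 ^ 2) else 0) := by
    intro x
    have hmem : x ∈ ball (0:E3) 1 ↔ x 0 ^ 2 + x 1 ^ 2 + x 2 ^ 2 < 1 := by
      rw [mem_ball, dist_zero_right, EuclideanSpace.norm_eq]
      simp only [Real.norm_eq_abs, sq_abs, Fin.sum_univ_three]
      rw [show ((1:ℝ) = Real.sqrt 1) from (Real.sqrt_one).symm]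
      rw [Real.sqrt_lt_sqrt_iff (by positivity)]
      rw [Real.sqrt_one]
    by_cases hx : x ∈ ball (0:E3) 1
    · rw [Set.indicator_of_mem hx, if_pos (hmem.1 hx)]
    · rw [Set.indicator_of_notMem hx, if_neg (fun h => hx (hmem.2 h))]
  simp_rw [key]
  rw [← ((EuclideanSpace.volume_preserving_symm_measurableEquiv_toLp (Fin 3)).symm).map_eq,
    integral_map_equiv]
  rw [← ((volume_preserving_piFinSuccAbove (fun _ : Fin 3 => ℝ) 2).symm).map_eq,
    integral_map_equiv]
  have h3 : MeasurePreserving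
      (MeasurableEquiv.prodCongr (MeasurableEquiv.refl ℝ)
        (MeasurableEquiv.finTwoArrow (α := ℝ))).symm
      (volume : Measure (ℝ × ℝ × ℝ)) (volume : Measure (ℝ × (Fin 2 → ℝ))) :=
    MeasurePreserving.symm _
      ((MeasurePreserving.id (volume : Measure ℝ)).prod (volume_preserving_finTwoArrow ℝ))
  rw [← h3.map_eq, integral_map_equiv]
  congr 1

/-- Antiderivative for the radial integral. -/
lemma radial_deriv (c : ℝ) (hc : 0 < c) (r : ℝ) :
    HasDerivAt (fun r : ℝ => (r ^ 2 + c) * Real.sqrt (r ^ 2 + c) / 3)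
      (r * Real.sqrt (r ^ 2 + c)) r := by
  have hu : (0:ℝ) < r ^ 2 + c := by positivity
  have h1 : HasDerivAt (fun r : ℝ => r ^ 2 + c) (2 * r) r := by
    simpa using (hasDerivAt_pow 2 r).add_const c
  have h2 : HasDerivAt (fun r : ℝ => Real.sqrt (r ^ 2 + c))
      (1 / (2 * Real.sqrt (r ^ 2 + c)) * (2 * r)) r :=
    (Real.hasDerivAt_sqrt hu.ne').comp r h1
  have h3 := (h1.mul h2).div_const 3
  refine h3.congr_deriv ?_
  symm
  have hs : Real.sqrt (r ^ 2 + c) * Real.sqrt (r ^ 2 + c) = r ^ 2 + c :=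
    Real.mul_self_sqrt hu.le
  have hsne : Real.sqrt (r ^ 2 + c) ≠ 0 := (Real.sqrt_pos.2 hu).ne'
  field_simp
  linear_combination r * hs

/-- The inner 2D integral, via polar coordinates. -/
lemma inner_int (q : ℝ) (hq0 : 0 < q) (z : ℝ) (hz : z ≠ 0) :
    (∫ p : ℝ × ℝ, (if p.1 ^ 2 + p.2 ^ 2 + z ^ 2 < 1 then
        Real.sqrt (p.1 ^ 2 + p.2 ^ 2 + q * z ^ 2) else 0))
    = Set.indicator (Set.Ioo (-1:ℝ) 1)
        (fun z => (2 * π / 3) * ((1 - (1-q) * z ^ 2) * Real.sqrt (1 - (1-q) * z ^ 2)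
          - q * Real.sqrt q * |z| ^ 3)) z := by
  rw [← integral_comp_polarCoord_symm]
  have hpt : ∀ p : ℝ × ℝ,
      p.1 • (if (polarCoord.symm p).1 ^ 2 + (polarCoord.symm p).2 ^ 2 + z ^ 2 < 1 then
        Real.sqrt ((polarCoord.symm p).1 ^ 2 + (polarCoord.symm p).2 ^ 2 + q * z ^ 2) else 0)
      = (fun r : ℝ => r * (if r ^ 2 + z ^ 2 < 1 then Real.sqrt (r ^ 2 + q * z ^ 2) else 0)) p.1
        * (fun _ : ℝ => (1:ℝ)) p.2 := by
    intro p
    have hxy : (polarCoord.symm p).1 ^ 2 + (polarCoord.symm p).2 ^ 2 = p.1 ^ 2 := by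
      show (p.1 * Real.cos p.2) ^ 2 + (p.1 * Real.sin p.2) ^ 2 = p.1 ^ 2
      nlinarith [Real.sin_sq_add_cos_sq p.2]
    rw [hxy, smul_eq_mul]
    ring
  simp_rw [hpt]
  rw [show polarCoord.target = Set.Ioi (0:ℝ) ×ˢ Set.Ioo (-π) π from rfl, Measure.volume_eq_prod,
    setIntegral_prod_mul (fun r : ℝ => r * (if r ^ 2 + z ^ 2 < 1 then Real.sqrt (r ^ 2 + q * z ^ 2) else 0))
      (fun _ : ℝ => (1:ℝ))]
  rw [setIntegral_const, smul_eq_mul, mul_one, measureReal_def, Real.volume_Ioo]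
  have hvol : ENNReal.toReal (ENNReal.ofReal (π - -π)) = 2 * π := by
    rw [ENNReal.toReal_ofReal (by linarith [Real.pi_pos])]; ring
  rw [hvol]
  by_cases h1 : z ^ 2 < 1
  · have hz1 : z ∈ Set.Ioo (-1:ℝ) 1 := by
      constructor <;> nlinarith
    rw [Set.indicator_of_mem hz1]
    set R := Real.sqrt (1 - z ^ 2) with hR
    have hRpos : 0 < R := Real.sqrt_pos.2 (by nlinarith)
    have hcongr : ∀ r ∈ Set.Ioi (0:ℝ),
        r * (if r ^ 2 + z ^ 2 < 1 then Real.sqrt (r ^ 2 + q * z ^ 2) else 0)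
        = Set.indicator (Set.Iio R) (fun r => r * Real.sqrt (r ^ 2 + q * z ^ 2)) r := by
      intro r hr
      have : r ^ 2 + z ^ 2 < 1 ↔ r ∈ Set.Iio R := by
        rw [Set.mem_Iio, hR, Real.lt_sqrt (le_of_lt hr)]
        constructor <;> intro h <;> nlinarith
      by_cases h : r ∈ Set.Iio R
      · rw [Set.indicator_of_mem h, if_pos (this.2 h)]
      · rw [Set.indicator_of_notMem h, if_neg (fun hh => h (this.1 hh)), mul_zero]
    rw [setIntegral_congr_fun measurableSet_Ioi hcongr,
      setIntegral_indicator measurableSet_Iio, Set.Ioi_inter_Iio,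
      ← integral_Ioc_eq_integral_Ioo, ← intervalIntegral.integral_of_le hRpos.le]
    have hc : 0 < q * z ^ 2 := by positivity
    rw [intervalIntegral.integral_eq_sub_of_hasDerivAt
        (fun r _ => radial_deriv (q * z ^ 2) hc r)
        ((Continuous.intervalIntegrable (by continuity) 0 R))]
    have hR2 : R ^ 2 = 1 - z ^ 2 := Real.sq_sqrt (by nlinarith)
    have e1 : R ^ 2 + q * z ^ 2 = 1 - (1-q) * z ^ 2 := by rw [hR2]; ring
    have e2 : Real.sqrt (0 ^ 2 + q * z ^ 2) = Real.sqrt q * |z| := by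
      rw [show (0:ℝ) ^ 2 + q * z ^ 2 = q * z ^ 2 by ring, Real.sqrt_mul hq0.le,
        Real.sqrt_sq_eq_abs]
    rw [e1, e2]
    have : (0:ℝ) ^ 2 + q * z ^ 2 = q * z ^ 2 := by ring
    rw [this]
    have habs : q * z ^ 2 * (Real.sqrt q * |z|) = q * Real.sqrt q * |z| ^ 3 := by
      have : z ^ 2 = |z| ^ 2 := (sq_abs z).symm
      rw [this]; ring
    rw [habs]
    ring
  · have hz1 : z ∉ Set.Ioo (-1:ℝ) 1 := by
      intro h
      exact h1 (by nlinarith [h.1, h.2])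
    rw [Set.indicator_of_notMem hz1]
    have hcongr : ∀ r ∈ Set.Ioi (0:ℝ),
        r * (if r ^ 2 + z ^ 2 < 1 then Real.sqrt (r ^ 2 + q * z ^ 2) else 0) = 0 := by
      intro r hr
      rw [if_neg (by nlinarith [sq_nonneg r]), mul_zero]
    rw [setIntegral_congr_fun measurableSet_Ioi hcongr, integral_zero, zero_mul]

lemma outer_deriv (b : ℝ) (hb0 : 0 < b) (hb1 : b < 1) (z : ℝ) (hz : |z| ≤ 1) :
    HasDerivAt (fun z : ℝ =>
        z * ((1 - b^2*z^2) * Real.sqrt (1 - b^2*z^2)) / 4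
        + (3/8) * (z * Real.sqrt (1 - b^2*z^2))
        + (3/(8*b)) * Real.arcsin (b*z))
      ((1 - b^2*z^2) * Real.sqrt (1 - b^2*z^2)) z := by
  have hbz : |b*z| < 1 := by
    rw [abs_mul, abs_of_pos hb0]
    calc b * |z| ≤ b * 1 := by nlinarith [abs_nonneg z]
    _ < 1 := by linarith
  have hwpos : 0 < 1 - b^2*z^2 := by
    have : (b*z)^2 < 1 := by nlinarith [abs_nonneg (b*z), sq_abs (b*z)]
    nlinarith
  set u := Real.sqrt (1 - b^2*z^2) with hu
  have hu2 : u^2 = 1 - b^2*z^2 := Real.sq_sqrt hwpos.le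
  have hupos : 0 < u := Real.sqrt_pos.2 hwpos
  have hw : HasDerivAt (fun z : ℝ => 1 - b^2*z^2) (-(b^2*(2*z))) z := by
    simpa using ((hasDerivAt_pow 2 z).const_mul (b^2)).const_sub 1
  have hsq : HasDerivAt (fun z : ℝ => Real.sqrt (1 - b^2*z^2))
      (1/(2*u) * (-(b^2*(2*z)))) z :=
    (Real.hasDerivAt_sqrt hwpos.ne').comp z hw
  have h1 : HasDerivAt (fun z : ℝ => z * ((1 - b^2*z^2) * Real.sqrt (1 - b^2*z^2)) / 4)
      ((1 * ((1 - b^2*z^2) * u) + z * ((-(b^2*(2*z))) * u + (1 - b^2*z^2) * (1/(2*u) * (-(b^2*(2*z))))))/4) z :=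
    ((hasDerivAt_id z).mul (hw.mul hsq)).div_const 4
  have h2 : HasDerivAt (fun z : ℝ => (3/8) * (z * Real.sqrt (1 - b^2*z^2)))
      ((3/8) * (1 * u + z * (1/(2*u) * (-(b^2*(2*z)))))) z :=
    ((hasDerivAt_id z).mul hsq).const_mul (3/8)
  have harc : HasDerivAt Real.arcsin (1 / Real.sqrt (1 - (b*z)^2)) (b*z) :=
    Real.hasDerivAt_arcsin (by intro h; rw [h] at hbz; simp at hbz)
      (by intro h; rw [h] at hbz; simp at hbz)
  have hbz' : HasDerivAt (fun z : ℝ => b*z) b z := by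
    simpa using (hasDerivAt_id z).const_mul b
  have h3 : HasDerivAt (fun z : ℝ => (3/(8*b)) * Real.arcsin (b*z))
      ((3/(8*b)) * (1 / Real.sqrt (1 - (b*z)^2) * b)) z :=
    ((harc.comp z hbz')).const_mul (3/(8*b))
  have hsqeq : Real.sqrt (1 - (b*z)^2) = u := by rw [hu]; ring_nf
  rw [hsqeq] at h3
  have := (h1.add h2).add h3
  refine this.congr_deriv ?_
  symm
  have hune : u ≠ 0 := hupos.ne'
  have hbne : b ≠ 0 := hb0.ne'
  field_simp
  ring_nf
  linear_combination (b*(384-256*b^2*z^2)*u^2 + 384*b - 8*b^2*z^2 - 640*b^3*z^2 + 256*b^5*z^4 + 12 + (-384*b + 256*b^3*z^2)*(u^2 + (1 - b^2*z^2))) * hu2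

lemma abs_cube_int : (∫ z in (-1:ℝ)..1, |z|^3) = 1/2 := by
  have h1 : (∫ z in (0:ℝ)..1, |z|^3) = 1/4 := by
    rw [intervalIntegral.integral_congr (g := fun z : ℝ => z^3) ?_, integral_pow]
    · norm_num
    · intro z hz
      rw [Set.uIcc_of_le (by norm_num : (0:ℝ) ≤ 1)] at hz
      simp [abs_of_nonneg hz.1]
  have h2 : (∫ z in (-1:ℝ)..0, |z|^3) = 1/4 := by
    rw [intervalIntegral.integral_congr (g := fun z : ℝ => -z^3) ?_]
    · rw [intervalIntegral.integral_neg, integral_pow]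
      norm_num
    · intro z hz
      rw [Set.uIcc_of_le (by norm_num : (-1:ℝ) ≤ 0)] at hz
      show |z|^3 = -z^3
      rw [abs_of_nonpos hz.2]
      ring
  rw [← intervalIntegral.integral_add_adjacent_intervals (b := (0:ℝ))
      ((Continuous.intervalIntegrable (by continuity) _ _))
      ((Continuous.intervalIntegrable (by continuity) _ _)), h1, h2]
  norm_num

set_option maxHeartbeats 1000000 in
lemma outer_int (q : ℝ) (hq0 : 0 < q) (hq1 : q < 1) :
    (∫ z : ℝ, Set.indicator (Set.Ioo (-1:ℝ) 1)
        (fun z => (2 * π / 3) * ((1 - (1-q) * z ^ 2) * Real.sqrt (1 - (1-q) * z ^ 2)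
          - q * Real.sqrt q * |z| ^ 3)) z)
    = (π/2) * (Real.sqrt q + Real.arcsin (Real.sqrt (1-q)) / Real.sqrt (1-q)) := by
  set b := Real.sqrt (1-q) with hb
  have hb2 : b^2 = 1-q := Real.sq_sqrt (by linarith)
  have hb0 : 0 < b := Real.sqrt_pos.2 (by linarith)
  have hb1 : b < 1 := by nlinarith [hb2]
  rw [integral_indicator measurableSet_Ioo, ← integral_Ioc_eq_integral_Ioo,
    ← intervalIntegral.integral_of_le (by norm_num : (-1:ℝ) ≤ 1)]
  have hsplit : ∀ z : ℝ, (2 * π / 3) * ((1 - (1-q) * z ^ 2) * Real.sqrt (1 - (1-q) * z ^ 2)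
      - q * Real.sqrt q * |z| ^ 3)
      = (2 * π / 3) * ((1 - b^2 * z ^ 2) * Real.sqrt (1 - b^2 * z ^ 2))
        - (2 * π / 3) * (q * Real.sqrt q) * |z| ^ 3 := by
    intro z; rw [hb2]; ring
  simp_rw [hsplit]
  rw [intervalIntegral.integral_sub
      ((Continuous.intervalIntegrable (by continuity) _ _))
      ((Continuous.intervalIntegrable (by continuity) _ _)),
    intervalIntegral.integral_const_mul, intervalIntegral.integral_const_mul, abs_cube_int]
  have hftc : (∫ z in (-1:ℝ)..1, (1 - b^2*z^2) * Real.sqrt (1 - b^2*z^2))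
      = q * Real.sqrt q / 2 + (3/4) * Real.sqrt q + (3/(4*b)) * Real.arcsin b := by
    rw [intervalIntegral.integral_eq_sub_of_hasDerivAt
        (f := fun z : ℝ => z * ((1 - b^2*z^2) * Real.sqrt (1 - b^2*z^2)) / 4
          + (3/8) * (z * Real.sqrt (1 - b^2*z^2)) + (3/(8*b)) * Real.arcsin (b*z))
        (fun z hz => outer_deriv b hb0 hb1 z (by
          rw [Set.uIcc_of_le (by norm_num : (-1:ℝ) ≤ 1)] at hz
          rw [abs_le]; exact ⟨hz.1, hz.2⟩))
        ((Continuous.intervalIntegrable (by continuity) _ _))]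
    have e1 : 1 - b^2*(1:ℝ)^2 = q := by rw [hb2]; ring
    have e2 : 1 - b^2*(-1:ℝ)^2 = q := by rw [hb2]; ring
    simp only [one_pow, neg_one_sq, mul_one]
    rw [show 1 - b^2 = q by linarith [hb2], mul_neg_one, Real.arcsin_neg]
    field_simp
    ring
  rw [hftc]
  have harc : Real.arcsin b / b = (3/(4*b)) * Real.arcsin b * (4/3) := by
    field_simp
  rw [harc]
  field_simp
  ring

/-- Integrability of the truncated integrand on `ℝ × ℝ × ℝ`. -/
lemma integrable_aux (q : ℝ) (hq0 : 0 < q) :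
    Integrable (fun u : ℝ × ℝ × ℝ => (if u.2.1 ^ 2 + u.2.2 ^ 2 + u.1 ^ 2 < 1 then
        Real.sqrt (u.2.1 ^ 2 + u.2.2 ^ 2 + q * u.1 ^ 2) else 0)) volume := by
  set S : Set (ℝ × ℝ × ℝ) := {u | u.2.1 ^ 2 + u.2.2 ^ 2 + u.1 ^ 2 < 1} with hS
  have hSm : MeasurableSet S :=
    measurableSet_lt (((measurable_fst.comp measurable_snd).pow_const 2).add
      ((measurable_snd.comp measurable_snd).pow_const 2) |>.add
      (measurable_fst.pow_const 2)) measurable_const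
  have heq : (fun u : ℝ × ℝ × ℝ => (if u.2.1 ^ 2 + u.2.2 ^ 2 + u.1 ^ 2 < 1 then
      Real.sqrt (u.2.1 ^ 2 + u.2.2 ^ 2 + q * u.1 ^ 2) else 0))
      = Set.indicator S (fun u => Real.sqrt (u.2.1 ^ 2 + u.2.2 ^ 2 + q * u.1 ^ 2)) := by
    funext u
    by_cases h : u ∈ S
    · rw [Set.indicator_of_mem h]; exact if_pos h
    · rw [Set.indicator_of_notMem h]; exact if_neg h
  rw [heq, integrable_indicator_iff hSm]
  have hsub : S ⊆ Set.Icc ((-1:ℝ), ((-1:ℝ), (-1:ℝ))) (1, (1, 1)) := by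
    intro u hu
    have h1 : u.2.1 ^ 2 + u.2.2 ^ 2 + u.1 ^ 2 < 1 := hu
    simp only [Set.mem_Icc, Prod.le_def]
    refine ⟨⟨?_, ?_, ?_⟩, ?_, ?_, ?_⟩ <;>
      nlinarith [sq_nonneg u.1, sq_nonneg u.2.1, sq_nonneg u.2.2,
        sq_nonneg (u.1-1), sq_nonneg (u.1+1), sq_nonneg (u.2.1-1), sq_nonneg (u.2.1+1),
        sq_nonneg (u.2.2-1), sq_nonneg (u.2.2+1)]
  have hcont : Continuous (fun u : ℝ × ℝ × ℝ => Real.sqrt (u.2.1 ^ 2 + u.2.2 ^ 2 + q * u.1 ^ 2)) :=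
    Real.continuous_sqrt.comp (by fun_prop)
  exact ((hcont.continuousOn).integrableOn_compact isCompact_Icc).mono_set hsub

end Aux

/-- For `0 < q < 1`, `∫_{S²} √(x₁² + x₂² + q x₃²) dσ(x)
    = 2π (√q + arcsin(√(1−q)) / √(1−q))`. -/
theorem sphere_integral_oblate (q : ℝ) (hq0 : 0 < q) (hq1 : q < 1) :
    (∫ x : Metric.sphere (0 : EuclideanSpace ℝ (Fin 3)) 1,
        Real.sqrt ((x : EuclideanSpace ℝ (Fin 3)) 0 ^ 2 +
          (x : EuclideanSpace ℝ (Fin 3)) 1 ^ 2 +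
          q * (x : EuclideanSpace ℝ (Fin 3)) 2 ^ 2) ∂sphereMeasure) =
      2 * Real.pi *
        (Real.sqrt q + Real.arcsin (Real.sqrt (1 - q)) / Real.sqrt (1 - q)) := by
  set f : EuclideanSpace ℝ (Fin 3) → ℝ :=
    fun x => Real.sqrt (x 0 ^ 2 + x 1 ^ 2 + q * x 2 ^ 2) with hfdef
  have hf : ∀ (r : ℝ), 0 < r → ∀ x : EuclideanSpace ℝ (Fin 3), f (r • x) = r * f x := by
    intro r hr x
    simp only [hfdef, PiLp.smul_apply, smul_eq_mul]
    rw [show (r * x 0) ^ 2 + (r * x 1) ^ 2 + q * (r * x 2) ^ 2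
        = r ^ 2 * (x 0 ^ 2 + x 1 ^ 2 + q * x 2 ^ 2) by ring,
      Real.sqrt_mul (sq_nonneg r), Real.sqrt_sq hr.le]
  have step1 := sphere_red_aux f hf
  have step2 := transfer_aux q
  have step3 : (∫ u : ℝ × ℝ × ℝ, (if u.2.1 ^ 2 + u.2.2 ^ 2 + u.1 ^ 2 < 1 then
        Real.sqrt (u.2.1 ^ 2 + u.2.2 ^ 2 + q * u.1 ^ 2) else 0))
      = ∫ z : ℝ, ∫ p : ℝ × ℝ, (if p.1 ^ 2 + p.2 ^ 2 + z ^ 2 < 1 then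
          Real.sqrt (p.1 ^ 2 + p.2 ^ 2 + q * z ^ 2) else 0) := by
    have hint := integrable_aux q hq0
    rw [Measure.volume_eq_prod] at hint
    rw [Measure.volume_eq_prod, integral_prod _ hint]
  have step4 : (∫ z : ℝ, ∫ p : ℝ × ℝ, (if p.1 ^ 2 + p.2 ^ 2 + z ^ 2 < 1 then
        Real.sqrt (p.1 ^ 2 + p.2 ^ 2 + q * z ^ 2) else 0))
      = ∫ z : ℝ, Set.indicator (Set.Ioo (-1:ℝ) 1)
          (fun z => (2 * Real.pi / 3) * ((1 - (1-q) * z ^ 2) * Real.sqrt (1 - (1-q) * z ^ 2)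
            - q * Real.sqrt q * |z| ^ 3)) z := by
    apply integral_congr_ae
    have h0 : ∀ᵐ z : ℝ, z ≠ 0 := by
      have hsing : (volume : Measure ℝ) ({0} : Set ℝ) = 0 := measure_singleton 0
      rw [MeasureTheory.ae_iff]
      refine measure_mono_null (fun z hz => ?_) hsing
      simp only [Set.mem_setOf_eq, not_not] at hz
      simp [hz]
    filter_upwards [h0] with z hz
    exact inner_int q hq0 z hz
  have := step1.trans (by rw [step2, step3, step4, outer_int q hq0 hq1])
  rw [show (∫ x : Metric.sphere (0 : EuclideanSpace ℝ (Fin 3)) 1,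
      Real.sqrt ((x : EuclideanSpace ℝ (Fin 3)) 0 ^ 2 +
        (x : EuclideanSpace ℝ (Fin 3)) 1 ^ 2 +
        q * (x : EuclideanSpace ℝ (Fin 3)) 2 ^ 2) ∂sphereMeasure)
      = ∫ x : Metric.sphere (0 : EuclideanSpace ℝ (Fin 3)) 1, f x
        ∂(volume : Measure (EuclideanSpace ℝ (Fin 3))).toSphere from rfl, this]
  ring
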